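/- Let n ≥ 2, let α ∈ [0,1] be fixed, and let f_1,…,f_{n-2} : [0,1] → [0,1] be injective measurable piecewise monotone functions. Then the set A = {(x, f_1(x), …, f_{n-2}(x), α) : x ∈ [0,1]} ⊆ ℝ^n (Euclidean space) has Hausdorff dimension at most 1. -/

import Mathlib

open MeasureTheory

/-- An injective function `f : [0,1] → [0,1]` is piecewise monotone if there is an at most
countable partition of `[0,1]` into pairwise disjoint measurable sets on each of which `f`
is strictly monotone. -/
def PiecewiseMonotone (f : ℝ → ℝ) : Prop :=
  ∃ S : ℕ → Set ℝ,
    (∀ j, MeasurableSet (S j)) ∧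
    Pairwise (Function.onFun Disjoint S) ∧
    (⋃ j, S j) = Set.Icc 0 1 ∧
    ∀ j, StrictMonoOn f (S j) ∨ StrictAntiOn f (S j)

/-- The Euclidean norm is at most the ℓ¹ norm. -/
lemma euclid_norm_le_sum_abs {n : ℕ} (v : EuclideanSpace ℝ (Fin n)) :
    ‖v‖ ≤ ∑ i, |v i| := by
  rw [EuclideanSpace.norm_eq]
  have h1 : ∑ i, ‖v i‖ ^ 2 ≤ (∑ i, |v i|) ^ 2 := by
    calc ∑ i, ‖v i‖ ^ 2 = ∑ i, |v i| ^ 2 := by simp [Real.norm_eq_abs]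
      _ ≤ (∑ i, |v i|) ^ 2 :=
        Finset.sum_sq_le_sq_sum_of_nonneg (fun i _ => abs_nonneg _)
  calc Real.sqrt (∑ i, ‖v i‖ ^ 2) ≤ Real.sqrt ((∑ i, |v i|) ^ 2) := Real.sqrt_le_sqrt h1
    _ = ∑ i, |v i| := Real.sqrt_sq (Finset.sum_nonneg fun i _ => abs_nonneg _)

/-- A piecewise monotone `n`-de Bruijn–Erdős set
`A = {(x, f₁(x), …, f_{n-2}(x), α) : x ∈ [0,1]} ⊆ ℝⁿ` has Hausdorff dimension at most `1`. -/
theorem stmt_2 (n : ℕ) (hn : 2 ≤ n) (α : ℝ) (hα : α ∈ Set.Icc (0 : ℝ) 1)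
    (f : ℕ → ℝ → ℝ)
    (hmaps : ∀ i, i < n - 2 → Set.MapsTo (f i) (Set.Icc 0 1) (Set.Icc 0 1))
    (hinj : ∀ i, i < n - 2 → Set.InjOn (f i) (Set.Icc 0 1))
    (hmeas : ∀ i, i < n - 2 → Measurable ((Set.Icc (0 : ℝ) 1).restrict (f i)))
    (hpm : ∀ i, i < n - 2 → PiecewiseMonotone (f i)) :
    dimH ((fun x : ℝ => (WithLp.toLp 2 (fun i : Fin n =>
        if (i : ℕ) = 0 then x
        else if (i : ℕ) = n - 1 then α
        else f ((i : ℕ) - 1) x) : EuclideanSpace ℝ (Fin n))) '' Set.Icc 0 1)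
      ≤ 1 := by
  obtain ⟨m, rfl⟩ : ∃ m, n = m + 2 := ⟨n - 2, by omega⟩
  have e1 : m + 2 - 1 = m + 1 := by omega
  have e2 : m + 2 - 2 = m := by omega
  simp only [e2] at hmaps hinj hmeas hpm
  simp only [e1]
  set F : ℝ → EuclideanSpace ℝ (Fin (m + 2)) := fun x =>
    WithLp.toLp 2 (fun i : Fin (m + 2) =>
      if (i : ℕ) = 0 then x else if (i : ℕ) = m + 1 then α else f ((i : ℕ) - 1) x) with hF
  -- extract the monotonicity partitions
  have hS : ∀ i, ∀ hi : i < m, ∃ S : ℕ → Set ℝ, (⋃ j, S j) = Set.Icc 0 1 ∧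
      ∀ j, StrictMonoOn (f i) (S j) ∨ StrictAntiOn (f i) (S j) := by
    intro i hi
    obtain ⟨S, _, _, h3, h4⟩ := hpm i hi
    exact ⟨S, h3, h4⟩
  choose S hScov hSmono using hS
  -- common refinement, indexed by a countable type
  set T : (Fin m → ℕ) → Set ℝ := fun c =>
    Set.Icc 0 1 ∩ ⋂ i : Fin m, S i.1 i.isLt (c i) with hT
  have hcov : Set.Icc (0 : ℝ) 1 ⊆ ⋃ c, T c := by
    intro x hx
    have hx' : ∀ i : Fin m, ∃ j, x ∈ S i.1 i.isLt j := by
      intro i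
      have h := hScov i.1 i.isLt
      have : x ∈ ⋃ j, S i.1 i.isLt j := h ▸ hx
      exact Set.mem_iUnion.1 this
    choose c hc using hx'
    exact Set.mem_iUnion.2 ⟨c, hx, Set.mem_iInter.2 hc⟩
  -- signs making each fᵢ increasing on T c
  have he' : ∀ (c : Fin m → ℕ) (k : ℕ), ∃ er : ℝ, ∀ _ : k < m,
      ∀ x ∈ T c, ∀ y ∈ T c, x < y → er * (f k y - f k x) = |f k y - f k x| := by
    intro c k
    by_cases hk : k < m
    · have hsub : T c ⊆ S k hk (c ⟨k, hk⟩) := fun x hx => Set.mem_iInter.1 hx.2 ⟨k, hk⟩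
      rcases hSmono k hk (c ⟨k, hk⟩) with h | h
      · refine ⟨1, fun _ x hx y hy hxy => ?_⟩
        rw [one_mul, abs_of_pos (sub_pos.2 (h (hsub hx) (hsub hy) hxy))]
      · refine ⟨-1, fun _ x hx y hy hxy => ?_⟩
        rw [abs_of_neg (sub_neg.2 (h (hsub hx) (hsub hy) hxy))]
        ring
    · exact ⟨0, fun hk' => absurd hk' hk⟩
  choose e he using he'
  set g : (Fin m → ℕ) → ℝ → ℝ := fun c x => x + ∑ k ∈ Finset.range m, e c k * f k x with hg
  -- the increment identity for g
  have hgap : ∀ c, ∀ x ∈ T c, ∀ y ∈ T c, x < y →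
      g c y - g c x = (y - x) + ∑ k ∈ Finset.range m, |f k y - f k x| := by
    intro c x hx y hy hxy
    have hsum : ∑ k ∈ Finset.range m, e c k * f k y - ∑ k ∈ Finset.range m, e c k * f k x
        = ∑ k ∈ Finset.range m, |f k y - f k x| := by
      rw [← Finset.sum_sub_distrib]
      refine Finset.sum_congr rfl fun k hk => ?_
      rw [← mul_sub]
      exact he c k (Finset.mem_range.1 hk) x hx y hy hxy
    have h2 : g c y - g c x = (y - x) +
        (∑ k ∈ Finset.range m, e c k * f k y - ∑ k ∈ Finset.range m, e c k * f k x) := by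
      simp only [hg]; ring
    rw [h2, hsum]
  have hgpos : ∀ c, ∀ x ∈ T c, ∀ y ∈ T c, x < y → 0 < g c y - g c x := by
    intro c x hx y hy hxy
    rw [hgap c x hx y hy hxy]
    exact add_pos_of_pos_of_nonneg (sub_pos.2 hxy)
      (Finset.sum_nonneg fun k _ => abs_nonneg _)
  have hginj : ∀ c, Set.InjOn (g c) (T c) := by
    intro c x hx y hy hxy
    by_contra hne
    rcases lt_or_gt_of_ne hne with h | h
    · exact absurd hxy (by have := hgpos c x hx y hy h; intro h'; rw [h'] at this; linarith)
    · exact absurd hxy (by have := hgpos c y hy x hx h; intro h'; rw [h'] at this; linarith)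
  -- the key Lipschitz-type estimate (coordinatewise, for the sup metric)
  have main : ∀ c, ∀ x ∈ T c, ∀ y ∈ T c, x < y → ∀ i : Fin (m + 2),
      |F x i - F y i| ≤ |g c x - g c y| := by
    intro c x hx y hy hxy i
    have habs : |g c x - g c y| = (y - x) + ∑ k ∈ Finset.range m, |f k y - f k x| := by
      rw [abs_sub_comm, abs_of_pos (hgpos c x hx y hy hxy), hgap c x hx y hy hxy]
    have hsumnn : (0:ℝ) ≤ ∑ k ∈ Finset.range m, |f k y - f k x| :=
      Finset.sum_nonneg fun k _ => abs_nonneg _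
    rw [habs]
    by_cases h0 : (i : ℕ) = 0
    · have hc : F x i - F y i = x - y := by simp only [hF, PiLp.toLp_apply, h0, ↓reduceIte]
      rw [hc, abs_sub_comm, abs_of_pos (sub_pos.2 hxy)]
      linarith
    · by_cases h1 : (i : ℕ) = m + 1
      · have hc : F x i - F y i = 0 := by simp only [hF, PiLp.toLp_apply, h0, h1, Nat.add_one_ne_zero, ↓reduceIte, sub_self]
        rw [hc, abs_zero]
        nlinarith
      · have hc : F x i - F y i = f ((i:ℕ)-1) x - f ((i:ℕ)-1) y := by simp only [hF, PiLp.toLp_apply, h0, h1, ↓reduceIte]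
        have hk : (i:ℕ) - 1 ∈ Finset.range m := by
          have := i.isLt; rw [Finset.mem_range]; omega
        have hle : |f ((i:ℕ)-1) y - f ((i:ℕ)-1) x|
            ≤ ∑ k ∈ Finset.range m, |f k y - f k x| :=
          Finset.single_le_sum (fun k _ => abs_nonneg (f k y - f k x)) hk
        rw [hc, abs_sub_comm]
        nlinarith
  have hkey : ∀ c, ∀ x ∈ T c, ∀ y ∈ T c, ∀ i : Fin (m + 2),
      |F x i - F y i| ≤ |g c x - g c y| := by
    intro c x hx y hy i
    rcases lt_trichotomy x y with h | h | h
    · exact main c x hx y hy h i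
    · subst h; simp
    · have h2 := main c y hy x hx h i
      rw [abs_sub_comm (F y i), abs_sub_comm (g c y)] at h2
      exact h2
  -- finish
  have himg : (F '' Set.Icc 0 1) ⊆ ⋃ c, F '' T c := by
    rintro z ⟨x, hx, rfl⟩
    rcases Set.mem_iUnion.1 (hcov hx) with ⟨c, hxT⟩
    exact Set.mem_iUnion.2 ⟨c, Set.mem_image_of_mem _ hxT⟩
  refine le_trans (dimH_mono himg) ?_
  rw [dimH_iUnion]
  refine iSup_le fun c => ?_
  have hLip : LipschitzOnWith 1
      (((fun x => WithLp.ofLp (F x)) ∘ Function.invFunOn (g c) (T c)) : ℝ → (Fin (m + 2) → ℝ)) (g c '' T c) := by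
    rw [lipschitzOnWith_iff_dist_le_mul]
    intro a ha b hb
    obtain ⟨u, hu, hu'⟩ := ha
    obtain ⟨v, hv, hv'⟩ := hb
    have hxT : Function.invFunOn (g c) (T c) a ∈ T c :=
      Function.invFunOn_mem ⟨u, hu, hu'⟩
    have hyT : Function.invFunOn (g c) (T c) b ∈ T c :=
      Function.invFunOn_mem ⟨v, hv, hv'⟩
    have hga : g c (Function.invFunOn (g c) (T c) a) = a :=
      Function.invFunOn_eq ⟨u, hu, hu'⟩
    have hgb : g c (Function.invFunOn (g c) (T c) b) = b :=
      Function.invFunOn_eq ⟨v, hv, hv'⟩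
    rw [NNReal.coe_one, one_mul, Real.dist_eq]
    refine (dist_pi_le_iff (abs_nonneg _)).2 fun i => ?_
    rw [Function.comp_apply, Function.comp_apply, Real.dist_eq]
    have h2 := hkey c _ hxT _ hyT i
    rw [hga, hgb] at h2
    exact h2
  have hLip' := (PiLp.lipschitzWith_toLp 2 (fun _ : Fin (m + 2) => ℝ)).comp_lipschitzOnWith hLip
  have himgeq : F '' T c = (WithLp.toLp 2 ∘ (fun x => WithLp.ofLp (F x)) ∘
      Function.invFunOn (g c) (T c)) '' (g c '' T c) := by
    rw [Set.image_image]
    refine (Set.image_congr fun x hx => ?_).symm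
    simp only [Function.comp_apply, WithLp.toLp_ofLp]
    rw [(hginj c).leftInvOn_invFunOn hx]
  refine le_trans ?_ (le_of_eq Real.dimH_univ)
  refine le_trans ?_ (dimH_mono (Set.subset_univ (g c '' T c)))
  rw [himgeq]
  exact hLip'.dimH_image_le
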